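/- arXiv:1406.4279 — 2 statements merged into one kernel-verified Lean document; each statement's English description precedes it below -/
import Mathlib

section
/- There exists a decomposition of the complete tripartite graph K_{4,4,4} with parts {1,2,3,4}, {5,6,7,8}, {9,10,11,12} into 6 parallel classes: 1 perfect matching, 3 classes of 4 vertex-disjoint P_3's, and 2 classes of 3 vertex-disjoint P_4's each covering all 12 vertices. -/
/-- The edges of a path given by the list of its vertices in order. -/
def pathEdges {V : Type*} [DecidableEq V] (l : List V) : Finset (Sym2 V) :=
  ((l.zip l.tail).map (Function.uncurry Sym2.mk)).toFinset

/-- A parallel class of paths on `k` vertices in a graph `G`: a set of lists, each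
a path on `k` vertices of `G`, which are vertex-disjoint and cover every vertex. -/
def IsPathClass {V : Type*} (G : SimpleGraph V) (k : ℕ) (C : Finset (List V)) : Prop :=
  (∀ l ∈ C, l.length = k ∧ l.Nodup ∧ l.Chain' G.Adj) ∧
  ∀ x : V, ∃! l : List V, l ∈ C ∧ x ∈ l

/-- All edges used by a class of paths. -/
def classEdges {V : Type*} [DecidableEq V] (C : Finset (List V)) : Finset (Sym2 V) :=
  C.biUnion pathEdges

/-- A uniformly resolvable `(P₂,P₃,P₄)`-decomposition of `G` into `r` perfect matchings
(parallel classes of `P₂`), `s` parallel classes of `P₃` and `t` parallel classes of `P₄`: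
pairwise edge-disjoint classes whose edges together are exactly the edges of `G`. -/
def IsURD {V : Type*} [DecidableEq V] (G : SimpleGraph V) (r s t : ℕ) : Prop :=
  ∃ F : Fin r ⊕ Fin s ⊕ Fin t → Finset (List V),
    (∀ i, IsPathClass G (Sum.elim (fun _ => 2) (Sum.elim (fun _ => 3) (fun _ => 4)) i) (F i)) ∧
    (∀ i j, i ≠ j → Disjoint (classEdges (F i)) (classEdges (F j))) ∧
    (∀ e, e ∈ G.edgeSet ↔ ∃ i, e ∈ classEdges (F i))

/-- The complete tripartite graph `K_{4,4,4}`: vertices `(part, i)` with `part : Fin 3`,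
adjacent iff in different parts. -/
def K444 : SimpleGraph (Fin 3 × Fin 4) := SimpleGraph.comap Prod.fst ⊤


def decChain {α : Type*} (R : α → α → Prop) [DecidableRel R] :
    (a : α) → (l : List α) → Decidable (List.Chain R a l)
  | _, [] => isTrue .nil
  | a, b :: l =>
    match inferInstanceAs (Decidable (R a b)), decChain R b l with
    | isTrue h1, isTrue h2 => isTrue (h2.cons h1)
    | isFalse h, _ => isFalse fun hc => by cases hc; exact h ‹_›
    | _, isFalse h => isFalse fun hc => by cases hc; exact h ‹_›

instance (priority := 2000) decChain' {α : Type*} (R : α → α → Prop) [DecidableRel R] :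
    (l : List α) → Decidable (List.Chain' R l)
  | [] => isTrue List.IsChain.nil
  | a :: l => decChain R a l

instance : DecidableRel K444.Adj := fun x y => inferInstanceAs (Decidable (x.1 ≠ y.1))

abbrev V4 := Fin 3 × Fin 4

def lv (n : ℕ) : V4 := (Fin.ofNat 3 ((n-1)/4 : ℕ), Fin.ofNat 4 ((n-1)%4 : ℕ))

def P (l : List ℕ) : List V4 := l.map lv

def C0 : Finset (List V4) := {P [1,6], P [2,5], P [3,10], P [4,9], P [7,12], P [8,11]}
def C1 : Finset (List V4) := {P [8,1,11], P [7,2,12], P [4,5,9], P [3,6,10]}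
def C2 : Finset (List V4) := {P [11,3,5], P [12,4,6], P [1,7,9], P [2,8,10]}
def C3 : Finset (List V4) := {P [6,9,8], P [5,10,7], P [2,11,4], P [1,12,3]}
def D1 : Finset (List V4) := {P [9,1,10,4], P [2,6,11,5], P [12,8,3,7]}
def D2 : Finset (List V4) := {P [1,5,12,6], P [3,9,2,10], P [8,4,7,11]}

lemma helper {V : Type*} [DecidableEq V] (C : Finset (List V)) (x : V)
    (h : ∃ l ∈ C, x ∈ l)
    (hu : ∀ l ∈ C, ∀ m ∈ C, x ∈ l → x ∈ m → l = m) :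
    ∃! l : List V, l ∈ C ∧ x ∈ l := by
  obtain ⟨l, hl, hx⟩ := h
  exact ⟨l, ⟨hl, hx⟩, fun m ⟨hm, hxm⟩ => hu m hm l hl hxm hx⟩

lemma pc (C : Finset (List V4)) (k : ℕ)
    (h1 : ∀ l ∈ C, l.length = k ∧ l.Nodup ∧ l.Chain' K444.Adj)
    (h2 : ∀ x : V4, (∃ l ∈ C, x ∈ l) ∧
      ∀ l ∈ C, ∀ m ∈ C, x ∈ l → x ∈ m → l = m) :
    IsPathClass K444 k C :=
  ⟨h1, fun x => helper C x (h2 x).1 (h2 x).2⟩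

/-- `K_{4,4,4}` admits a uniformly resolvable decomposition into 6 parallel classes:
1 perfect matching, 3 classes of 4 vertex-disjoint `P₃`'s and 2 classes of 3
vertex-disjoint `P₄`'s. -/
theorem stmt12 : IsURD K444 1 3 2 := by
  refine ⟨Sum.elim ![C0] (Sum.elim ![C1, C2, C3] ![D1, D2]), ?_, ?_, ?_⟩
  · rintro (i | i | i) <;> fin_cases i <;>
      exact pc _ _ (by decide) (by set_option synthInstance.maxSize 1024 in decide)
  · decide
  · decide
end

section
/- There exists a uniformly resolvable decomposition of the complete multipartite graph with 5 parts of size 2 (vertex set Z_10, parts {i, i+5}) into 6 perfect matchings and 1 parallel class consisting of 2 vertex-disjoint 5-cycles. -/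
/-- The edges of a cycle given by the list of its vertices in cyclic order. -/
def cycEdges {V : Type*} [DecidableEq V] (l : List V) : Finset (Sym2 V) :=
  ((l.zip (l.rotate 1)).map (Function.uncurry Sym2.mk)).toFinset

/-- A parallel class of cycles on `k` vertices in `G`: vertex-disjoint `k`-cycles
covering every vertex. -/
def IsCycleClass {V : Type*} (G : SimpleGraph V) (k : ℕ) (C : Finset (List V)) : Prop :=
  (∀ l ∈ C, l.length = k ∧ l.Nodup ∧ ∀ p ∈ l.zip (l.rotate 1), G.Adj p.1 p.2) ∧
  ∀ x : V, ∃! l : List V, l ∈ C ∧ x ∈ l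

/-- The edges of the `i`-th class, where the first `m` classes are matching (path)
classes and the last `n` classes are cycle classes. -/
def edgesOf {V : Type*} [DecidableEq V] {m n : ℕ}
    (F : Fin m ⊕ Fin n → Finset (List V)) : Fin m ⊕ Fin n → Finset (Sym2 V)
  | Sum.inl i => (F (Sum.inl i)).biUnion pathEdges
  | Sum.inr i => (F (Sum.inr i)).biUnion cycEdges

/-- The complete 5-partite graph of type `2⁵` on `Z₁₀`, with parts `{i, i+5}`:
two vertices are adjacent iff their residues modulo 5 differ. -/
def G25 : SimpleGraph (ZMod 10) :=
  SimpleGraph.comap (fun x => ZMod.castHom (show (5:ℕ) ∣ 10 by norm_num) (ZMod 5) x) ⊤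

/-- A uniformly resolvable decomposition of the complete 5-partite graph of type `2⁵`
into `r` perfect matchings and `t` parallel classes each consisting of 2
vertex-disjoint 5-cycles. -/
def IsURD25 (r t : ℕ) : Prop :=
  ∃ F : Fin r ⊕ Fin t → Finset (List (ZMod 10)),
    (∀ i : Fin r, IsPathClass G25 2 (F (Sum.inl i))) ∧
    (∀ i : Fin t, IsCycleClass G25 5 (F (Sum.inr i))) ∧
    (∀ i j, i ≠ j → Disjoint (edgesOf F i) (edgesOf F j)) ∧
    (∀ e, e ∈ G25.edgeSet ↔ ∃ i, e ∈ edgesOf F i)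

instance G25.adjDecidable : DecidableRel G25.Adj := fun a b =>
  decidable_of_iff (ZMod.castHom (show (5:ℕ) ∣ 10 by norm_num) (ZMod 5) a ≠
    ZMod.castHom (show (5:ℕ) ∣ 10 by norm_num) (ZMod 5) b) Iff.rfl

lemma cover_unique {α : Type*} [DecidableEq α] (C : Finset α) (p : α → Prop)
    [DecidablePred p] (h : (C.filter p).card = 1) : ∃! l, l ∈ C ∧ p l := by
  obtain ⟨a, ha⟩ := Finset.card_eq_one.mp h
  refine ⟨a, ?_, ?_⟩
  · exact Finset.mem_filter.mp (ha ▸ Finset.mem_singleton_self a)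
  · intro y hy
    have : y ∈ C.filter p := Finset.mem_filter.mpr hy
    simpa [ha] using this

def Fdef : Fin 6 ⊕ Fin 1 → Finset (List (ZMod 10)) :=
  Sum.elim
    ![ {[2,3],[4,5],[8,9],[0,6],[1,7]},
       {[1,2],[3,4],[5,6],[7,8],[9,0]},
       {[0,3],[2,5],[4,7],[6,9],[8,1]},
       {[1,4],[3,6],[5,8],[7,0],[9,2]},
       {[0,4],[8,2],[1,5],[9,3],[6,7]},
       {[4,8],[2,6],[5,9],[3,7],[0,1]} ]
    ![ {[0,2,4,6,8],[1,3,5,7,9]} ]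

/-- The complete 5-partite graph of type `2⁵` admits a uniformly resolvable
decomposition into 6 perfect matchings and 1 parallel class consisting of 2
vertex-disjoint 5-cycles. -/
theorem stmt14 : IsURD25 6 1 := by
  refine ⟨Fdef, ?_, ?_, ?_, ?_⟩
  · intro i
    refine ⟨?_, ?_⟩
    · intro l hl
      fin_cases i <;> fin_cases hl <;>
        refine ⟨rfl, by decide, ?_⟩ <;>
        simp only [List.Chain', List.isChain_cons_cons, List.isChain_singleton, and_true] <;> decide
    · intro x
      apply cover_unique
      revert x; fin_cases i <;> decide
  · intro i
    refine ⟨?_, ?_⟩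
    · fin_cases i <;> decide
    · intro x
      apply cover_unique
      revert x; fin_cases i <;> decide
  · decide
  · decide
end
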